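/- For each (I,J) ∈ O, the one-point compactification of the subspace A_{I,J} of ℝ^{n−1} is homeomorphic to the (n−1)-dimensional sphere S^{n−1} (the unit sphere in ℝⁿ). -/

import Mathlib

open Finset

/-- The maximum of `|z i - z j|` over `j ∈ S`, with the convention `max ∅ = 0`. -/
noncomputable def maxDist {n : ℕ} (z : Fin n → ℝ) (i : Fin n) (S : Finset (Fin n)) : ℝ :=
  if h : S.Nonempty then S.sup' h (fun j => |z i - z j|) else 0

/-- `ν^z_{I,i}`: the minimum over all subsets `S ⊆ I \ {i}` with `|S| = ⌊n/3⌋` of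
`max_{j ∈ S} |z i - z j|`, with the convention `min ∅ = 0`. -/
noncomputable def nu (n : ℕ) (z : Fin n → ℝ) (I : Finset (Fin n)) (i : Fin n) : ℝ :=
  if h : ((I.erase i).powersetCard (n / 3)).Nonempty then
    ((I.erase i).powersetCard (n / 3)).inf' h (maxDist z i)
  else 0

/-- `ν^z_I = max_{i ∈ I} ν^z_{I,i}`, with the convention `max ∅ = 0`. -/
noncomputable def nuMax (n : ℕ) (z : Fin n → ℝ) (I : Finset (Fin n)) : ℝ :=
  if h : I.Nonempty then I.sup' h (nu n z I) else 0

/-- `δ^z = (max{t₁,…,tₙ} - min{t₁,…,tₙ}) / n`. -/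
noncomputable def delta (n : ℕ) (z : Fin n → ℝ) : ℝ :=
  if h : (Finset.univ : Finset (Fin n)).Nonempty then
    (Finset.univ.sup' h z - Finset.univ.inf' h z) / n
  else 0

/-- `ẏ = (t₁, …, t_{n-1}, 0) ∈ ℝⁿ` for `y = (t₁, …, t_{n-1}) ∈ ℝ^{n-1}`. -/
def ydot (n : ℕ) (y : Fin (n - 1) → ℝ) : Fin n → ℝ :=
  fun i => if h : (i : ℕ) < n - 1 then y ⟨i, h⟩ else 0

/-- The open cube `(-1, 1)^m`, the interior of `D^m = [-1,1]^m`. -/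
def IntD (m : ℕ) : Set (Fin m → ℝ) := {y | ∀ i, y i ∈ Set.Ioo (-1 : ℝ) 1}

/-- `(I, J) ∈ O`: `I` and `J` are disjoint nonempty subsets of `[n]` with `I ∪ J = [n]`,
`|I| > n/3`, and `|J| > n/3`. -/
def memO (n : ℕ) (I J : Finset (Fin n)) : Prop :=
  I.Nonempty ∧ J.Nonempty ∧ Disjoint I J ∧ I ∪ J = Finset.univ ∧
    (n : ℝ) < 3 * I.card ∧ (n : ℝ) < 3 * J.card

/-- The set `A_{I,J}`. -/
def setAIJ (n : ℕ) (I J : Finset (Fin n)) : Set (Fin (n - 1) → ℝ) :=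
  {y | y ∈ IntD (n - 1) ∧ ∀ i ∈ I, ∀ j ∈ J,
    delta n (ydot n y) < ydot n y j - ydot n y i ∧
    nu n (ydot n y) I i < delta n (ydot n y) ∧
    nu n (ydot n y) J j < delta n (ydot n y)}

/-- The set `A = { y ∈ Int(D^{n-1}) : ν^{ẏ}_{[n]} < δ^{ẏ} }`. -/
def setA (n : ℕ) : Set (Fin (n - 1) → ℝ) :=
  {y | y ∈ IntD (n - 1) ∧ nuMax n (ydot n y) Finset.univ < delta n (ydot n y)}

/-- The point `b ∈ ℝ^{n-1}` associated to `(I, J) ∈ O`: if `n ∈ J` then `b_i = -1/2` for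
`i ∈ I` and `b_j = 0` for `j ∈ J \ {n}`; if `n ∈ I` then `b_i = 0` for `i ∈ I \ {n}` and
`b_j = 1/2` for `j ∈ J`. -/
noncomputable def bpt (n : ℕ) (I J : Finset (Fin n)) : Fin (n - 1) → ℝ :=
  fun i =>
    if (⟨n - 1, by have := i.isLt; omega⟩ : Fin n) ∈ J then
      (if Fin.castLE (Nat.sub_le n 1) i ∈ I then -(1 / 2 : ℝ) else 0)
    else
      (if Fin.castLE (Nat.sub_le n 1) i ∈ I then 0 else (1 / 2 : ℝ))


open Set Pointwise

section Star

variable {E : Type*} [NormedAddCommGroup E] [NormedSpace ℝ E] {C : Set E}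

-- strong star property: shrinking the closure lands inside
variable (hC : IsOpen C) (h0 : (0 : E) ∈ C)
  (hstar : ∀ x ∈ closure C, ∀ s : ℝ, 0 ≤ s → s < 1 → s • x ∈ C)

include hstar in
theorem ray_up_closure {x : E} {t t' : ℝ} (ht : 0 < t) (htt' : t < t')
    (hx : x ∈ t • closure C) : x ∈ t' • C := by
  have ht' : 0 < t' := ht.trans htt'
  rw [mem_smul_set_iff_inv_smul_mem₀ ht.ne'] at hx
  rw [mem_smul_set_iff_inv_smul_mem₀ ht'.ne']
  have h := hstar _ hx (t / t') (by positivity) ((div_lt_one ht').2 htt')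
  have : (t / t') • t⁻¹ • x = t'⁻¹ • x := by
    rw [smul_smul]; congr 1; field_simp
  rwa [this] at h

include hstar in
theorem ray_up {x : E} {t t' : ℝ} (ht : 0 < t) (htt' : t ≤ t')
    (hx : x ∈ t • C) : x ∈ t' • C := by
  rcases eq_or_lt_of_le htt' with rfl | h
  · exact hx
  · exact ray_up_closure hstar ht h (smul_set_mono subset_closure hx)

include hC h0 hstar in
theorem gauge_eq_self : {x : E | gauge C x < 1} = C := by
  have habs : Absorbent ℝ C := absorbent_nhds_zero (hC.mem_nhds h0)
  ext x
  constructor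
  · intro hx
    obtain ⟨b, hb0, hb1, y, hy, rfl⟩ := exists_lt_of_gauge_lt habs hx
    exact hstar y (subset_closure hy) b hb0.le hb1
  · intro hx
    exact gauge_lt_one_of_mem_of_isOpen hC hx

include hC h0 hstar in
theorem gauge_continuous : Continuous (gauge C) := by
  have habs : Absorbent ℝ C := absorbent_nhds_zero (hC.mem_nhds h0)
  have hlt : ∀ c : ℝ, IsOpen {x : E | gauge C x < c} := by
    intro c
    rw [gauge_lt_eq' habs]
    refine isOpen_iUnion fun r => isOpen_iUnion fun hr => isOpen_iUnion fun _ => ?_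
    exact hC.smul₀ hr.ne'
  have hgt : ∀ c : ℝ, IsOpen {x : E | c < gauge C x} := by
    intro c
    rcases lt_or_ge c 0 with hc | hc
    · have : {x : E | c < gauge C x} = univ :=
        eq_univ_of_forall fun x => hc.trans_le (gauge_nonneg x)
      rw [this]; exact isOpen_univ
    · rw [isOpen_iff_mem_nhds]
      intro x hx
      obtain ⟨c', hc'1, hc'2⟩ := exists_between (show c < gauge C x from hx)
      have hc'pos : 0 < c' := hc.trans_lt hc'1
      have hxnot : x ∉ c' • closure C := by
        intro hmem
        obtain ⟨t', ht'1, ht'2⟩ := exists_between hc'2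
        exact absurd (gauge_le_of_mem (hc'pos.trans ht'1).le
          (ray_up_closure hstar hc'pos ht'1 hmem)) (not_le.2 ht'2)
      refine mem_nhds_iff.2 ⟨(c' • closure C)ᶜ, ?_, ?_, hxnot⟩
      · intro w hw
        show c < gauge C w
        refine hc'1.trans_le (le_csInf habs.gauge_set_nonempty ?_)
        rintro t ⟨ht0, htw⟩
        by_contra hlt'
        push_neg at hlt'
        exact hw (smul_set_mono subset_closure (ray_up hstar ht0 hlt'.le htw))
      · exact (isClosed_closure.smul_of_ne_zero hc'pos.ne').isOpen_compl
  rw [continuous_iff_continuousAt]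
  intro x
  rw [ContinuousAt, tendsto_order]
  constructor
  · intro b hb
    exact Filter.eventually_of_mem ((hgt b).mem_nhds hb) fun y hy => hy
  · intro b hb
    exact Filter.eventually_of_mem ((hlt b).mem_nhds hb) fun y hy => hy

/-- An open set containing `0` which is strongly star-shaped about `0` is homeomorphic to the
whole space. -/
noncomputable def starHomeo (hC : IsOpen C) (h0 : (0:E) ∈ C)
    (hstar : ∀ x ∈ closure C, ∀ s : ℝ, 0 ≤ s → s < 1 → s • x ∈ C) : C ≃ₜ E := by
  have habs : Absorbent ℝ C := absorbent_nhds_zero (hC.mem_nhds h0)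
  have hCg := gauge_eq_self hC h0 hstar
  have hcont := gauge_continuous hC h0 hstar
  have hlt1 : ∀ x : C, gauge C (x : E) < 1 := fun x =>
    gauge_lt_one_of_mem_of_isOpen hC x.2
  have hne : ∀ x : C, 1 - gauge C (x : E) ≠ 0 := fun x => by
    have := hlt1 x; intro h; linarith [h]
  have hne' : ∀ y : E, 1 + gauge C y ≠ 0 := fun y => by
    have := gauge_nonneg (s := C) y; intro h; linarith
  refine
    { toFun := fun x => (1 - gauge C (x : E))⁻¹ • (x : E)
      invFun := fun y => ⟨(1 + gauge C y)⁻¹ • y, ?_⟩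
      left_inv := ?_
      right_inv := ?_
      continuous_toFun := ?_
      continuous_invFun := ?_ }
  · have h0g := gauge_nonneg (s := C) y
    have hmem : (1 + gauge C y)⁻¹ • y ∈ {x : E | gauge C x < 1} := by
      show gauge C _ < 1
      rw [gauge_smul_of_nonneg (inv_nonneg.2 (by linarith : (0:ℝ) ≤ 1 + gauge C y))]
      rw [smul_eq_mul, inv_mul_lt_iff₀ (by linarith)]
      linarith
    rwa [hCg] at hmem
  · intro x
    have hg : gauge C ((1 - gauge C (x : E))⁻¹ • (x : E)) =
        (1 - gauge C (x : E))⁻¹ * gauge C (x : E) := by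
      rw [gauge_smul_of_nonneg (inv_nonneg.2 (by have := hlt1 x; linarith)), smul_eq_mul]
    ext
    simp only [hg, smul_smul]
    have h1 := hlt1 x
    have h0g := gauge_nonneg (s := C) (x : E)
    have : (1 + (1 - gauge C (x:E))⁻¹ * gauge C (x:E))⁻¹ * (1 - gauge C (x:E))⁻¹ = 1 := by
      rw [← mul_inv, inv_eq_one]
      have hne1 : (1 : ℝ) - gauge C (x:E) ≠ 0 := hne x
      field_simp
      try ring
    rw [this, one_smul]
  · intro y
    have hg : gauge C ((1 + gauge C y)⁻¹ • y) = (1 + gauge C y)⁻¹ * gauge C y := by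
      rw [gauge_smul_of_nonneg
        (inv_nonneg.2 (by linarith [gauge_nonneg (s := C) y] : (0:ℝ) ≤ 1 + gauge C y)), smul_eq_mul]
    simp only [hg, smul_smul]
    have h0g := gauge_nonneg (s := C) y
    have : (1 - (1 + gauge C y)⁻¹ * gauge C y)⁻¹ * (1 + gauge C y)⁻¹ = 1 := by
      rw [← mul_inv, inv_eq_one]
      have : (1 : ℝ) + gauge C y ≠ 0 := hne' y
      field_simp
      try ring
    rw [this, one_smul]
  · exact ((continuous_const.sub (hcont.comp continuous_subtype_val)).inv₀ hne).smul
      continuous_subtype_val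
  · refine Continuous.subtype_mk ?_ _
    exact ((continuous_const.add hcont).inv₀ hne').smul continuous_id

end Star
section Geo

open Finset

variable {n : ℕ}

/-! ### Continuity of the constraint functions -/

theorem continuous_ydot (p : Fin n) : Continuous fun y : Fin (n-1) → ℝ => ydot n y p := by
  unfold ydot
  by_cases h : (p : ℕ) < n - 1
  · simp only [dif_pos h]; exact continuous_apply _
  · simp only [dif_neg h]; exact continuous_const

theorem continuous_delta : Continuous fun y : Fin (n-1) → ℝ => delta n (ydot n y) := by
  unfold delta
  by_cases hU : (Finset.univ : Finset (Fin n)).Nonempty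
  · simp only [dif_pos hU]
    exact ((Continuous.finset_sup'_apply hU fun p _ => continuous_ydot p).sub
      (Continuous.finset_inf'_apply hU fun p _ => continuous_ydot p)).div_const _
  · simp only [dif_neg hU]; exact continuous_const

theorem continuous_maxDist (i : Fin n) (S : Finset (Fin n)) :
    Continuous fun y : Fin (n-1) → ℝ => maxDist (ydot n y) i S := by
  unfold maxDist
  by_cases h : S.Nonempty
  · simp only [dif_pos h]
    exact Continuous.finset_sup'_apply h fun j _ =>
      ((continuous_ydot i).sub (continuous_ydot j)).abs
  · simp only [dif_neg h]; exact continuous_const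

theorem continuous_nu (K : Finset (Fin n)) (i : Fin n) :
    Continuous fun y : Fin (n-1) → ℝ => nu n (ydot n y) K i := by
  unfold nu
  by_cases h : ((K.erase i).powersetCard (n / 3)).Nonempty
  · simp only [dif_pos h]
    exact Continuous.finset_inf'_apply h fun S _ => continuous_maxDist i S
  · simp only [dif_neg h]; exact continuous_const

/-! ### `setAIJ` is open, and the weak version is closed -/

theorem isOpen_setAIJ (I J : Finset (Fin n)) : IsOpen (setAIJ n I J) := by
  have h1 : setAIJ n I J = IntD (n-1) ∩
      ⋂ i ∈ I, ⋂ j ∈ J,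
        ({y : Fin (n-1) → ℝ | delta n (ydot n y) < ydot n y j - ydot n y i} ∩
         ({y | nu n (ydot n y) I i < delta n (ydot n y)} ∩
          {y | nu n (ydot n y) J j < delta n (ydot n y)})) := by
    ext y
    simp only [setAIJ, Set.mem_setOf_eq, Set.mem_inter_iff, Set.mem_iInter]
  rw [h1]
  have hIntD : IsOpen (IntD (n-1)) := by
    have : IntD (n-1) = ⋂ i : Fin (n-1), (fun y : Fin (n-1) → ℝ => y i) ⁻¹' Set.Ioo (-1) 1 := by
      ext y; simp [IntD]
    rw [this]
    exact isOpen_iInter_of_finite fun i => isOpen_Ioo.preimage (continuous_apply i)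
  refine hIntD.inter (isOpen_biInter_finset fun i _ => isOpen_biInter_finset fun j _ => ?_)
  refine IsOpen.inter ?_ (IsOpen.inter ?_ ?_)
  · exact isOpen_lt (continuous_delta) ((continuous_ydot j).sub (continuous_ydot i))
  · exact isOpen_lt (continuous_nu I i) (continuous_delta)
  · exact isOpen_lt (continuous_nu J j) (continuous_delta)

/-- The weak (closed) version of `setAIJ`. -/
def setAw (n : ℕ) (I J : Finset (Fin n)) : Set (Fin (n - 1) → ℝ) :=
  {y | (∀ p, y p ∈ Set.Icc (-1 : ℝ) 1) ∧ ∀ i ∈ I, ∀ j ∈ J,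
    delta n (ydot n y) ≤ ydot n y j - ydot n y i ∧
    nu n (ydot n y) I i ≤ delta n (ydot n y) ∧
    nu n (ydot n y) J j ≤ delta n (ydot n y)}

theorem isClosed_setAw (I J : Finset (Fin n)) : IsClosed (setAw n I J) := by
  have h1 : setAw n I J = (⋂ p : Fin (n-1), (fun y : Fin (n-1) → ℝ => y p) ⁻¹' Set.Icc (-1) 1) ∩
      ⋂ i ∈ I, ⋂ j ∈ J,
        ({y : Fin (n-1) → ℝ | delta n (ydot n y) ≤ ydot n y j - ydot n y i} ∩
         ({y | nu n (ydot n y) I i ≤ delta n (ydot n y)} ∩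
          {y | nu n (ydot n y) J j ≤ delta n (ydot n y)})) := by
    ext y
    simp only [setAw, Set.mem_setOf_eq, Set.mem_inter_iff, Set.mem_iInter, Set.mem_preimage]
  rw [h1]
  refine IsClosed.inter (isClosed_iInter fun p => isClosed_Icc.preimage (continuous_apply p)) ?_
  refine isClosed_biInter fun i _ => isClosed_biInter fun j _ => ?_
  refine IsClosed.inter ?_ (IsClosed.inter ?_ ?_)
  · exact isClosed_le (continuous_delta) ((continuous_ydot j).sub (continuous_ydot i))
  · exact isClosed_le (continuous_nu I i) (continuous_delta)
  · exact isClosed_le (continuous_nu J j) (continuous_delta)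

theorem setAIJ_subset_setAw (I J : Finset (Fin n)) : setAIJ n I J ⊆ setAw n I J := by
  rintro y ⟨hcube, h⟩
  refine ⟨fun p => ⟨(hcube p).1.le, (hcube p).2.le⟩, fun i hi j hj => ?_⟩
  obtain ⟨h1, h2, h3⟩ := h i hi j hj
  exact ⟨h1.le, h2.le, h3.le⟩

end Geo
section Geo2

open Finset

variable {n : ℕ}

theorem ydot_comb (a y : Fin (n-1) → ℝ) (s : ℝ) (p : Fin n) :
    ydot n (a + s • (y - a)) p = (1 - s) * ydot n a p + s * ydot n y p := by
  unfold ydot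
  by_cases h : (p:ℕ) < n-1
  · simp only [dif_pos h, Pi.add_apply, Pi.smul_apply, Pi.sub_apply, smul_eq_mul]; ring
  · simp only [dif_neg h]; ring

theorem bpt_bounds (I J : Finset (Fin n)) (p : Fin (n-1)) :
    -(1/2 : ℝ) ≤ bpt n I J p ∧ bpt n I J p ≤ 1/2 := by
  unfold bpt; split_ifs <;> norm_num

theorem bpt_spec (hn : 2 ≤ n) (I J : Finset (Fin n)) (hdisj : Disjoint I J)
    (hunion : I ∪ J = Finset.univ) :
    ∃ c : ℝ, -(1/2) ≤ c ∧ c ≤ 0 ∧ (∀ p ∈ I, ydot n (bpt n I J) p = c) ∧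
      (∀ p ∈ J, ydot n (bpt n I J) p = c + 1/2) := by
  set lst : Fin n := ⟨n-1, by omega⟩ with hlst
  have hval : ∀ p : Fin n, p ≠ lst → (p:ℕ) < n - 1 := by
    intro p hp
    by_contra h
    push_neg at h
    have h1 := p.isLt
    exact hp (Fin.ext (by simp [hlst]; omega))
  have heval : ∀ (p : Fin n) (h : (p:ℕ) < n - 1),
      ydot n (bpt n I J) p = bpt n I J ⟨p, h⟩ := fun p h => dif_pos h
  have heval0 : ydot n (bpt n I J) lst = 0 := dif_neg (by simp [hlst])
  have hcast : ∀ (v : ℕ) (h : v < n - 1),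
      Fin.castLE (Nat.sub_le n 1) (⟨v, h⟩ : Fin (n-1)) = (⟨v, by omega⟩ : Fin n) :=
    fun v h => rfl
  by_cases hlstJ : lst ∈ J
  · refine ⟨-(1/2), le_refl _, by norm_num, ?_, ?_⟩
    · intro p hp
      have hpl : p ≠ lst := fun h => (Finset.disjoint_left.1 hdisj hp) (h ▸ hlstJ)
      have h := hval p hpl
      rw [heval p h]
      simp only [bpt]
      rw [if_pos hlstJ]
      have : Fin.castLE (Nat.sub_le n 1) (⟨(p:ℕ), h⟩ : Fin (n-1)) = p := Fin.ext rfl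
      rw [this, if_pos hp]
    · intro p hp
      by_cases hpl : p = lst
      · rw [hpl, heval0]; norm_num
      · have h := hval p hpl
        rw [heval p h]
        simp only [bpt]
        rw [if_pos hlstJ]
        have hne : Fin.castLE (Nat.sub_le n 1) (⟨(p:ℕ), h⟩ : Fin (n-1)) = p := Fin.ext rfl
        have hpI : p ∉ I := Finset.disjoint_right.1 hdisj hp
        rw [hne, if_neg hpI]
        norm_num
  · have hlstI : lst ∈ I := by
      have hm : lst ∈ I ∪ J := hunion ▸ Finset.mem_univ lst
      rcases Finset.mem_union.1 hm with h | h
      · exact h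
      · exact absurd h hlstJ
    refine ⟨0, by norm_num, le_refl _, ?_, ?_⟩
    · intro p hp
      by_cases hpl : p = lst
      · rw [hpl, heval0]
      · have h := hval p hpl
        rw [heval p h]
        simp only [bpt]
        rw [if_neg hlstJ]
        have : Fin.castLE (Nat.sub_le n 1) (⟨(p:ℕ), h⟩ : Fin (n-1)) = p := Fin.ext rfl
        rw [this, if_pos hp]
    · intro p hp
      have hpl : p ≠ lst := fun h => (Finset.disjoint_right.1 hdisj hp) (h ▸ hlstI)
      have h := hval p hpl
      rw [heval p h]
      simp only [bpt]
      rw [if_neg hlstJ]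
      have hne : Fin.castLE (Nat.sub_le n 1) (⟨(p:ℕ), h⟩ : Fin (n-1)) = p := Fin.ext rfl
      have hpI : p ∉ I := Finset.disjoint_right.1 hdisj hp
      rw [hne, if_neg hpI]
      norm_num

end Geo2
section Geo3

open Finset

variable {n : ℕ}

set_option maxHeartbeats 1000000 in
theorem main_lemma (hn : 2 ≤ n) (I J : Finset (Fin n)) (hIJ : memO n I J)
    {y : Fin (n-1) → ℝ} (hy : y ∈ setAw n I J) {s : ℝ} (h0s : 0 ≤ s) (hs1 : s < 1) :
    bpt n I J + s • (y - bpt n I J) ∈ setAIJ n I J := by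
  obtain ⟨⟨i₀, hi₀⟩, ⟨j₀, hj₀⟩, hdisj, hunion, hcardI, hcardJ⟩ := hIJ
  obtain ⟨hycube, hIneq⟩ := hy
  haveI : Nonempty (Fin n) := ⟨⟨0, by omega⟩⟩
  have hU : (Finset.univ : Finset (Fin n)).Nonempty := Finset.univ_nonempty
  have hn' : (0:ℝ) < n := by positivity
  have hnn : (2:ℝ) ≤ n := by exact_mod_cast hn
  set b := bpt n I J with hbdef
  set z := ydot n y with hz
  set w := ydot n (b + s • (y - b)) with hwdef
  obtain ⟨c, hcm, hcM, hcI, hcJ⟩ := bpt_spec hn I J hdisj hunion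
  have hw : ∀ p, w p = (1 - s) * ydot n b p + s * z p := fun p => ydot_comb b y s p
  have hdelta : ∀ v : Fin n → ℝ,
      delta n v = (Finset.univ.sup' hU v - Finset.univ.inf' hU v) / n := fun v => dif_pos hU
  have hdiv : ∀ a a' : ℝ, a ≤ a' → a / n ≤ a' / n := fun a a' h => by
    rw [div_eq_mul_inv, div_eq_mul_inv]
    exact mul_le_mul_of_nonneg_right h (by positivity)
  have hmem : ∀ p : Fin n, p ∈ I ∨ p ∈ J := fun p =>
    Finset.mem_union.1 (hunion ▸ Finset.mem_univ p)
  have hβle : ∀ p, ydot n b p ≤ c + 1/2 := fun p => by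
    rcases hmem p with h | h
    · rw [hcI p h]; linarith
    · rw [hcJ p h]
  have hβge : ∀ p, c ≤ ydot n b p := fun p => by
    rcases hmem p with h | h
    · rw [hcI p h]
    · rw [hcJ p h]; linarith
  have hord : ∀ i ∈ I, ∀ j ∈ J, delta n z ≤ z j - z i := fun i hi j hj => (hIneq i hi j hj).1
  have hδ0 : 0 ≤ delta n z := by
    rw [hdelta]
    have h1 : Finset.univ.inf' hU z ≤ z i₀ := Finset.inf'_le _ (Finset.mem_univ i₀)
    have h2 : z i₀ ≤ Finset.univ.sup' hU z := Finset.le_sup' _ (Finset.mem_univ i₀)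
    have : (0:ℝ) ≤ Finset.univ.sup' hU z - Finset.univ.inf' hU z := by linarith
    positivity
  have hwsup : Finset.univ.sup' hU w ≤ s * Finset.univ.sup' hU z + (1-s) * (c + 1/2) := by
    refine Finset.sup'_le _ _ fun p _ => ?_
    rw [hw p]
    have h1 : z p ≤ Finset.univ.sup' hU z := Finset.le_sup' _ (Finset.mem_univ p)
    have h3 := mul_le_mul_of_nonneg_left (hβle p) (by linarith : (0:ℝ) ≤ 1 - s)
    have h4 := mul_le_mul_of_nonneg_left h1 h0s
    linarith
  have hwinf : s * Finset.univ.inf' hU z + (1-s) * c ≤ Finset.univ.inf' hU w := by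
    refine Finset.le_inf' _ _ fun p _ => ?_
    rw [hw p]
    have h1 : Finset.univ.inf' hU z ≤ z p := Finset.inf'_le _ (Finset.mem_univ p)
    have h3 := mul_le_mul_of_nonneg_left (hβge p) (by linarith : (0:ℝ) ≤ 1 - s)
    have h4 := mul_le_mul_of_nonneg_left h1 h0s
    linarith
  have hspread : s * (Finset.univ.sup' hU z - Finset.univ.inf' hU z) + (1-s) * (1/2)
      ≤ Finset.univ.sup' hU w - Finset.univ.inf' hU w := by
    obtain ⟨p, -, hp⟩ := Finset.exists_mem_eq_sup' hU z
    obtain ⟨q, -, hq⟩ := Finset.exists_mem_eq_inf' hU z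
    have hAi : ∃ i ∈ I, z i ≤ Finset.univ.inf' hU z := by
      rcases hmem q with h | h
      · exact ⟨q, h, hq.ge⟩
      · refine ⟨i₀, hi₀, ?_⟩
        have := hord i₀ hi₀ q h
        rw [hq]; linarith
    have hAj : ∃ j ∈ J, Finset.univ.sup' hU z ≤ z j := by
      rcases hmem p with h | h
      · refine ⟨j₀, hj₀, ?_⟩
        have := hord p h j₀ hj₀
        rw [hp]; linarith
      · exact ⟨p, h, hp.le⟩
    obtain ⟨i₁, hi₁, hi₁'⟩ := hAi
    obtain ⟨j₁, hj₁, hj₁'⟩ := hAj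
    have h1 : w j₁ ≤ Finset.univ.sup' hU w := Finset.le_sup' _ (Finset.mem_univ j₁)
    have h2 : Finset.univ.inf' hU w ≤ w i₁ := Finset.inf'_le _ (Finset.mem_univ i₁)
    have h3 : w j₁ - w i₁ = s * (z j₁ - z i₁) + (1-s) * (1/2) := by
      rw [hw j₁, hw i₁, hcI i₁ hi₁, hcJ j₁ hj₁]; ring
    have h4 : Finset.univ.sup' hU z - Finset.univ.inf' hU z ≤ z j₁ - z i₁ := by linarith
    have h5 := mul_le_mul_of_nonneg_left h4 h0s
    linarith
  have heq : s * delta n z + (1-s)/(2*n)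
      = (s * (Finset.univ.sup' hU z - Finset.univ.inf' hU z) + (1-s) * (1/2)) / n := by
    rw [hdelta]
    field_simp
  have hdw_up : delta n w ≤ s * delta n z + (1-s)/(2*n) := by
    rw [hdelta w, heq]
    exact hdiv _ _ (by linarith)
  have hdw_lo : s * delta n z + (1-s)/(2*n) ≤ delta n w := by
    rw [hdelta w, heq]
    exact hdiv _ _ hspread
  have hgap : (1-s)/(2*n) < (1-s)/2 := by
    apply div_lt_div_of_pos_left (by linarith) (by norm_num)
    linarith
  have hgap0 : 0 < (1-s)/(2*n) := by
    apply div_pos (by linarith)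
    linarith
  refine ⟨?_, ?_⟩
  · -- cube condition
    intro p
    have hb1 := (bpt_bounds I J p).1
    have hb2 := (bpt_bounds I J p).2
    have hy1 := (hycube p).1
    have hy2 := (hycube p).2
    have hval : (b + s • (y - b)) p = (1-s) * b p + s * y p := by
      simp only [Pi.add_apply, Pi.smul_apply, Pi.sub_apply, smul_eq_mul]; ring
    rw [hval]
    have h3 := mul_le_mul_of_nonneg_left hb2 (by linarith : (0:ℝ) ≤ 1 - s)
    have h3' := mul_le_mul_of_nonneg_left hb1 (by linarith : (0:ℝ) ≤ 1 - s)
    have h4 := mul_le_mul_of_nonneg_left hy2 h0s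
    have h4' := mul_le_mul_of_nonneg_left hy1 h0s
    constructor <;> [skip; skip] <;> nlinarith
  · intro i hi j hj
    have hnuI : nu n w I i ≤ s * nu n z I i := by
      have hcard : n/3 ≤ (I.erase i).card := by
        have h : n < 3 * I.card := by exact_mod_cast hcardI
        have h2 : (I.erase i).card = I.card - 1 := Finset.card_erase_of_mem hi
        omega
      have hT : ((I.erase i).powersetCard (n/3)).Nonempty :=
        Finset.powersetCard_nonempty.2 hcard
      unfold nu
      simp only [dif_pos hT]
      obtain ⟨S₀, hS₀mem, hS₀⟩ := Finset.exists_mem_eq_inf' hT (maxDist z i)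
      rw [hS₀]
      refine le_trans (Finset.inf'_le _ hS₀mem) ?_
      have hsub : S₀ ⊆ I.erase i := (Finset.mem_powersetCard.1 hS₀mem).1
      by_cases hS₀ne : S₀.Nonempty
      · unfold maxDist
        simp only [dif_pos hS₀ne]
        refine Finset.sup'_le _ _ fun k hk => ?_
        have hkI : k ∈ I := Finset.mem_of_mem_erase (hsub hk)
        have hwk : w i - w k = s * (z i - z k) := by
          rw [hw i, hw k, hcI i hi, hcI k hkI]; ring
        rw [hwk, abs_mul, abs_of_nonneg h0s]
        exact mul_le_mul_of_nonneg_left (Finset.le_sup' (fun k => |z i - z k|) hk) h0s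
      · unfold maxDist
        simp only [dif_neg hS₀ne, mul_zero, le_refl]
    have hnuJ : nu n w J j ≤ s * nu n z J j := by
      have hcard : n/3 ≤ (J.erase j).card := by
        have h : n < 3 * J.card := by exact_mod_cast hcardJ
        have h2 : (J.erase j).card = J.card - 1 := Finset.card_erase_of_mem hj
        omega
      have hT : ((J.erase j).powersetCard (n/3)).Nonempty :=
        Finset.powersetCard_nonempty.2 hcard
      unfold nu
      simp only [dif_pos hT]
      obtain ⟨S₀, hS₀mem, hS₀⟩ := Finset.exists_mem_eq_inf' hT (maxDist z j)
      rw [hS₀]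
      refine le_trans (Finset.inf'_le _ hS₀mem) ?_
      have hsub : S₀ ⊆ J.erase j := (Finset.mem_powersetCard.1 hS₀mem).1
      by_cases hS₀ne : S₀.Nonempty
      · unfold maxDist
        simp only [dif_pos hS₀ne]
        refine Finset.sup'_le _ _ fun k hk => ?_
        have hkJ : k ∈ J := Finset.mem_of_mem_erase (hsub hk)
        have hwk : w j - w k = s * (z j - z k) := by
          rw [hw j, hw k, hcJ j hj, hcJ k hkJ]; ring
        rw [hwk, abs_mul, abs_of_nonneg h0s]
        exact mul_le_mul_of_nonneg_left (Finset.le_sup' (fun k => |z j - z k|) hk) h0s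
      · unfold maxDist
        simp only [dif_neg hS₀ne, mul_zero, le_refl]
    obtain ⟨h1, h2, h3⟩ := hIneq i hi j hj
    refine ⟨?_, ?_, ?_⟩
    · -- ordering
      have hwji : w j - w i = s * (z j - z i) + (1-s) * (1/2) := by
        rw [hw j, hw i, hcI i hi, hcJ j hj]; ring
      have h5 := mul_le_mul_of_nonneg_left h1 h0s
      calc delta n w ≤ s * delta n z + (1-s)/(2*n) := hdw_up
        _ < s * delta n z + (1-s)/2 := by linarith [hgap]
        _ ≤ w j - w i := by rw [hwji]; linarith
    · calc nu n w I i ≤ s * nu n z I i := hnuI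
        _ ≤ s * delta n z := mul_le_mul_of_nonneg_left h2 h0s
        _ < s * delta n z + (1-s)/(2*n) := lt_add_of_pos_right _ hgap0
        _ ≤ delta n w := hdw_lo
    · calc nu n w J j ≤ s * nu n z J j := hnuJ
        _ ≤ s * delta n z := mul_le_mul_of_nonneg_left h3 h0s
        _ < s * delta n z + (1-s)/(2*n) := lt_add_of_pos_right _ hgap0
        _ ≤ delta n w := hdw_lo

end Geo3
section Geo4

open Finset

variable {n : ℕ}

theorem bpt_mem_setAw (hn : 2 ≤ n) (I J : Finset (Fin n)) (hIJ : memO n I J) :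
    bpt n I J ∈ setAw n I J := by
  obtain ⟨⟨i₀, hi₀⟩, ⟨j₀, hj₀⟩, hdisj, hunion, hcardI, hcardJ⟩ := hIJ
  obtain ⟨c, hcm, hcM, hcI, hcJ⟩ := bpt_spec hn I J hdisj hunion
  haveI : Nonempty (Fin n) := ⟨⟨0, by omega⟩⟩
  have hU : (Finset.univ : Finset (Fin n)).Nonempty := Finset.univ_nonempty
  have hn' : (0:ℝ) < n := by positivity
  have hnn : (2:ℝ) ≤ n := by exact_mod_cast hn
  set β := ydot n (bpt n I J) with hβ
  have hmem : ∀ p : Fin n, p ∈ I ∨ p ∈ J := fun p =>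
    Finset.mem_union.1 (hunion ▸ Finset.mem_univ p)
  have hβle : ∀ p, β p ≤ c + 1/2 := fun p => by
    rcases hmem p with h | h
    · rw [hcI p h]; linarith
    · rw [hcJ p h]
  have hβge : ∀ p, c ≤ β p := fun p => by
    rcases hmem p with h | h
    · rw [hcI p h]
    · rw [hcJ p h]; linarith
  have hδ : delta n β = 1/(2*n) := by
    have hd : delta n β = (Finset.univ.sup' hU β - Finset.univ.inf' hU β) / n := dif_pos hU
    have hsup : Finset.univ.sup' hU β = c + 1/2 := by
      refine le_antisymm (Finset.sup'_le _ _ fun p _ => hβle p) ?_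
      rw [← hcJ j₀ hj₀]
      exact Finset.le_sup' β (Finset.mem_univ j₀)
    have hinf : Finset.univ.inf' hU β = c := by
      refine le_antisymm ?_ (Finset.le_inf' _ _ fun p _ => hβge p)
      rw [← hcI i₀ hi₀]
      exact Finset.inf'_le β (Finset.mem_univ i₀)
    rw [hd, hsup, hinf]
    field_simp
    ring
  have hnu : ∀ (K : Finset (Fin n)) (k), k ∈ K → (∀ p ∈ K, ∀ q ∈ K, β p = β q) →
      (n:ℝ) < 3 * K.card → nu n β K k ≤ 0 := by
    intro K k hk hconst hcard
    have hcard' : n/3 ≤ (K.erase k).card := by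
      have h : n < 3 * K.card := by exact_mod_cast hcard
      have h2 : (K.erase k).card = K.card - 1 := Finset.card_erase_of_mem hk
      omega
    have hT : ((K.erase k).powersetCard (n/3)).Nonempty :=
      Finset.powersetCard_nonempty.2 hcard'
    unfold nu
    simp only [dif_pos hT]
    obtain ⟨S₀, hS₀mem⟩ := hT
    refine le_trans (Finset.inf'_le _ hS₀mem) ?_
    have hsub : S₀ ⊆ K.erase k := (Finset.mem_powersetCard.1 hS₀mem).1
    by_cases hS₀ne : S₀.Nonempty
    · unfold maxDist
      simp only [dif_pos hS₀ne]
      refine Finset.sup'_le _ _ fun p hp => ?_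
      have hpK : p ∈ K := Finset.mem_of_mem_erase (hsub hp)
      rw [hconst k hk p hpK, sub_self, abs_zero]
    · unfold maxDist
      simp only [dif_neg hS₀ne, le_refl]
  have h2n : 1/(2*n) ≤ (1:ℝ)/2 := one_div_le_one_div_of_le (by norm_num) (by linarith)
  have h2n0 : (0:ℝ) ≤ 1/(2*n) := by positivity
  refine ⟨?_, ?_⟩
  · intro p
    have h1 := (bpt_bounds I J p).1
    have h2 := (bpt_bounds I J p).2
    exact ⟨by linarith, by linarith⟩
  · intro i hi j hj
    refine ⟨?_, ?_, ?_⟩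
    · show delta n β ≤ β j - β i
      rw [hδ, hcJ j hj, hcI i hi]
      linarith
    · show nu n β I i ≤ delta n β
      rw [hδ]
      refine le_trans (hnu I i hi (fun p hp q hq => ?_) hcardI) h2n0
      rw [hcI p hp, hcI q hq]
    · show nu n β J j ≤ delta n β
      rw [hδ]
      refine le_trans (hnu J j hj (fun p hp q hq => ?_) hcardJ) h2n0
      rw [hcJ p hp, hcJ q hq]

end Geo4

/-- For each `(I,J) ∈ O`, the one-point compactification of the subspace `A_{I,J}` of
`ℝ^{n-1}` is homeomorphic to the `(n-1)`-sphere, i.e. the unit sphere in `ℝⁿ`. -/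
theorem stmt_6 (n : ℕ) (hn : 2 ≤ n) (I J : Finset (Fin n)) (hIJ : memO n I J) :
    Nonempty (OnePoint (setAIJ n I J) ≃ₜ
      Metric.sphere (0 : EuclideanSpace ℝ (Fin n)) 1) := by
  classical
  have hbA : bpt n I J ∈ setAIJ n I J := by
    have h := main_lemma hn I J hIJ (bpt_mem_setAw hn I J hIJ) (le_refl (0:ℝ)) one_pos
    simpa using h
  set A := setAIJ n I J with hA
  set b := bpt n I J with hb
  let e : (Fin (n-1) → ℝ) ≃ₜ (Fin (n-1) → ℝ) := Homeomorph.subRight b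
  set C : Set (Fin (n-1) → ℝ) := e '' A with hC
  have hAw : closure A ⊆ setAw n I J :=
    closure_minimal (setAIJ_subset_setAw I J) (isClosed_setAw I J)
  have hCopen : IsOpen C := e.isOpen_image.2 (isOpen_setAIJ I J)
  have h0C : (0 : Fin (n-1) → ℝ) ∈ C := ⟨b, hbA, by simp [e]⟩
  have hstarC : ∀ x ∈ closure C, ∀ s : ℝ, 0 ≤ s → s < 1 → s • x ∈ C := by
    intro x hx s h0s hs1
    rw [hC, ← e.image_closure] at hx
    obtain ⟨a, ha, rfl⟩ := hx
    refine ⟨b + s • (a - b), main_lemma hn I J hIJ (hAw ha) h0s hs1, ?_⟩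
    simp only [e, Homeomorph.subRight_apply]
    rw [add_sub_cancel_left]
  let h1 : A ≃ₜ C := e.image A
  let h2 : C ≃ₜ (Fin (n-1) → ℝ) := starHomeo hCopen h0C hstarC
  let h3 : (Fin (n-1) → ℝ) ≃ₜ EuclideanSpace ℝ (Fin (n-1)) :=
    (EuclideanSpace.equiv (Fin (n-1)) ℝ).toHomeomorph.symm
  haveI : Fact (Module.finrank ℝ (EuclideanSpace ℝ (Fin n)) = (n-1) + 1) :=
    ⟨by rw [finrank_euclideanSpace_fin]; omega⟩
  have hvmem : EuclideanSpace.single (⟨0, by omega⟩ : Fin n) (1:ℝ) ∈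
      Metric.sphere (0 : EuclideanSpace ℝ (Fin n)) 1 := by
    simp [EuclideanSpace.norm_single]
  let v : Metric.sphere (0 : EuclideanSpace ℝ (Fin n)) 1 := ⟨_, hvmem⟩
  let ph := stereographic' (n-1) v
  let h4 : (ph.source : Set _) ≃ₜ (ph.target : Set _) := ph.toHomeomorphSourceTarget
  let h5 : ({v}ᶜ : Set (Metric.sphere (0 : EuclideanSpace ℝ (Fin n)) 1)) ≃ₜ
      EuclideanSpace ℝ (Fin (n-1)) :=
    ((Homeomorph.setCongr (stereographic'_source v).symm).trans h4).trans
      ((Homeomorph.setCongr (stereographic'_target v)).trans (Homeomorph.Set.univ _))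
  let h6 : OnePoint ({v}ᶜ : Set (Metric.sphere (0 : EuclideanSpace ℝ (Fin n)) 1)) ≃ₜ
      Metric.sphere (0 : EuclideanSpace ℝ (Fin n)) 1 :=
    OnePoint.equivOfIsEmbeddingOfRangeEq v Subtype.val Topology.IsEmbedding.subtypeVal
      (by rw [Subtype.range_coe])
  exact ⟨(((h1.trans h2).trans (h3.trans h5.symm)).onePointCongr).trans h6⟩
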